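/- Let ρ be a regular representation of A_{q,n} on an n-dimensional k-vector space V. Then there exists a k-algebra automorphism α of A_{q,n} such that α(q_1) = ker(ρ), where q_1 is the ideal of A_{q,n} generated by x_2, …, x_q. In particular, ker(ρ) is generated by the elements α(x_2), …, α(x_q). -/

import Mathlib

noncomputable section

/-- The ring of `n`-nil polynomials `A_{q,n} = k[x_1,…,x_q]/m_0^n`. -/
abbrev Aqn (k : Type) [Field k] (q n : ℕ) : Type :=
  MvPolynomial (Fin q) k ⧸
    (Ideal.span (Set.range (MvPolynomial.X : Fin q → MvPolynomial (Fin q) k))) ^ n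

/-- The image of the variable `x_i` in `A_{q,n}`. -/
def xA (k : Type) [Field k] (q n : ℕ) (i : Fin q) : Aqn k q n :=
  Ideal.Quotient.mk _ (MvPolynomial.X i)

/-- The maximal ideal `m` of `A_{q,n}` generated by `x_1, …, x_q`. -/
def mA (k : Type) [Field k] (q n : ℕ) : Ideal (Aqn k q n) :=
  Ideal.span (Set.range (xA k q n))

/-- The ideal `q_1` of `A_{q,n}` generated by `x_2, …, x_q`. -/
def q1A (k : Type) [Field k] (q n : ℕ) [NeZero q] : Ideal (Aqn k q n) :=
  Ideal.span {y | ∃ i : Fin q, i ≠ 0 ∧ y = xA k q n i}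


open Polynomial

namespace RegRepAux
section Part1

variable {k : Type} [Field k] {V : Type} [AddCommGroup V] [Module k V]

lemma commute_aeval (N : Module.End k V) (p r : k[X]) :
    Commute (Polynomial.aeval N p) (Polynomial.aeval N r) := by
  show _ * _ = _ * _
  rw [← map_mul, ← map_mul, mul_comm]

lemma commute_aeval' (N : Module.End k V) (r : k[X]) :
    Commute N (Polynomial.aeval N r) := by
  have := commute_aeval N X r
  rwa [aeval_X] at this

lemma pow_mul_aeval {n : ℕ} (N : Module.End k V) (hn : 1 ≤ n) (hNn : N ^ n = 0) (Q : k[X]) :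
    N ^ (n - 1) * Polynomial.aeval N Q = Q.coeff 0 • N ^ (n - 1) := by
  conv_lhs => rw [← X_mul_divX_add Q]
  rw [map_add, map_mul, aeval_X, aeval_C, mul_add, ← mul_assoc, ← pow_succ,
    Nat.sub_add_cancel hn, hNn, zero_mul, zero_add, ← Algebra.commutes, ← Algebra.smul_def]

lemma coeff_eq_zero_of_apply {n : ℕ} (hn : 1 ≤ n) (N : Module.End k V) (hNn : N ^ n = 0)
    {v : V} (hv : (N ^ (n - 1)) v ≠ 0) :
    ∀ j, j ≤ n → ∀ Q : k[X], (N ^ (n - j) * Polynomial.aeval N Q) v = 0 →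
      ∀ i, i < j → Q.coeff i = 0 := by
  intro j
  induction j with
  | zero => intro _ Q _ i hi; omega
  | succ j ih =>
    intro hj Q hQ i hi
    have h0 : Q.coeff 0 = 0 := by
      have h1 : (N ^ (n - 1) * Polynomial.aeval N Q) v = 0 := by
        have hsplit : N ^ (n - 1) = N ^ j * N ^ (n - (j + 1)) := by
          rw [← pow_add]; congr 1; omega
        rw [hsplit, mul_assoc, Module.End.mul_apply, hQ, map_zero]
      rw [pow_mul_aeval N hn hNn Q] at h1
      rw [LinearMap.smul_apply] at h1
      rcases smul_eq_zero.mp h1 with h | h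
      · exact h
      · exact absurd h hv
    rcases Nat.eq_zero_or_pos i with hi0 | hipos
    · rwa [hi0]
    · have hQX : X * divX Q = Q := by
        conv_rhs => rw [← X_mul_divX_add Q]
        rw [h0, map_zero, add_zero]
      have h2 : (N ^ (n - j) * Polynomial.aeval N (divX Q)) v = 0 := by
        have h3 : N ^ (n - j) * Polynomial.aeval N (divX Q)
            = N ^ (n - (j + 1)) * Polynomial.aeval N Q := by
          conv_rhs => rw [← hQX]
          rw [map_mul, aeval_X, ← mul_assoc, ← pow_succ, show n - (j+1) + 1 = n - j by omega]
        rw [h3, hQ]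
      obtain ⟨i', rfl⟩ : ∃ i', i = i' + 1 := ⟨i - 1, by omega⟩
      have := ih (by omega) (divX Q) h2 i' (by omega)
      rwa [coeff_divX] at this

lemma exists_poly_of_commute {n : ℕ} [FiniteDimensional k V] (hn : 1 ≤ n)
    (hdim : Module.finrank k V = n)
    (N : Module.End k V) (hNn : N ^ n = 0) (hN1 : N ^ (n - 1) ≠ 0)
    (T : Module.End k V) (hT : N * T = T * N) :
    ∃ p : k[X], T = Polynomial.aeval N p := by
  obtain ⟨v, hv⟩ : ∃ v, (N ^ (n - 1)) v ≠ 0 := by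
    by_contra h; push_neg at h
    exact hN1 (LinearMap.ext fun v => by simpa using h v)
  have haev : ∀ (c : Fin n → k) (w : V),
      Polynomial.aeval N (∑ j : Fin n, C (c j) * X ^ (j : ℕ)) w
        = ∑ j : Fin n, c j • (N ^ (j : ℕ)) w := by
    intro c w
    rw [map_sum, LinearMap.sum_apply]
    refine Finset.sum_congr rfl fun j _ => ?_
    rw [map_mul, aeval_C, aeval_X_pow, Module.End.mul_apply, Module.algebraMap_end_apply]
  have hcoeff : ∀ (c : Fin n → k) (j : Fin n),
      (∑ m : Fin n, C (c m) * X ^ (m : ℕ)).coeff (j : ℕ) = c j := by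
    intro c j
    rw [finset_sum_coeff]
    rw [Finset.sum_eq_single j]
    · simp [coeff_X_pow]
    · intro m _ hm
      simp only [coeff_C_mul, coeff_X_pow]
      rw [if_neg (by simpa [Fin.val_eq_val] using (Ne.symm hm)), mul_zero]
    · intro h; exact absurd (Finset.mem_univ j) h
  have hind : LinearIndependent k (fun j : Fin n => (N ^ (j : ℕ)) v) := by
    rw [Fintype.linearIndependent_iff]
    intro c hc j
    have hQv : Polynomial.aeval N (∑ j : Fin n, C (c j) * X ^ (j : ℕ)) v = 0 := by
      rw [haev, hc]
    have := coeff_eq_zero_of_apply hn N hNn hv n le_rfl _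
      (by rw [Nat.sub_self, pow_zero, one_mul, hQv]) (j : ℕ) j.isLt
    rwa [hcoeff] at this
  have : Nonempty (Fin n) := ⟨⟨0, by omega⟩⟩
  have hcard : Fintype.card (Fin n) = Module.finrank k V := by simp [hdim]
  let b := basisOfLinearIndependentOfCardEqFinrank hind hcard
  have hb : ∀ j : Fin n, b j = (N ^ (j : ℕ)) v := fun j => by
    rw [coe_basisOfLinearIndependentOfCardEqFinrank]
  set d : Fin n → k := fun j => b.repr (T v) j with hd
  set p : k[X] := ∑ j : Fin n, C (d j) * X ^ (j : ℕ) with hp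
  have hpv : Polynomial.aeval N p v = T v := by
    rw [hp, haev]
    have := b.sum_repr (T v)
    calc ∑ j : Fin n, d j • (N ^ (j : ℕ)) v = ∑ j : Fin n, b.repr (T v) j • b j := by
          refine Finset.sum_congr rfl fun j _ => by rw [hb, hd]
      _ = T v := b.sum_repr (T v)
  refine ⟨p, ?_⟩
  apply b.ext
  intro j
  rw [hb]
  have hcNT : Commute N T := hT
  have hTN : T * N ^ (j : ℕ) = N ^ (j : ℕ) * T := ((hcNT.pow_left (j : ℕ)).symm).eq
  have hPN : N ^ (j : ℕ) * Polynomial.aeval N p = Polynomial.aeval N p * N ^ (j : ℕ) :=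
    ((commute_aeval' N p).pow_left (j : ℕ)).eq
  calc T ((N ^ (j : ℕ)) v) = (T * N ^ (j : ℕ)) v := rfl
    _ = (N ^ (j : ℕ) * T) v := by rw [hTN]
    _ = (N ^ (j : ℕ)) (T v) := rfl
    _ = (N ^ (j : ℕ)) (Polynomial.aeval N p v) := by rw [hpv]
    _ = (N ^ (j : ℕ) * Polynomial.aeval N p) v := rfl
    _ = (Polynomial.aeval N p * N ^ (j : ℕ)) v := by rw [hPN]
    _ = Polynomial.aeval N p ((N ^ (j : ℕ)) v) := rfl

lemma coeff_zero_eq_zero {n : ℕ} (hn : 1 ≤ n) (N : Module.End k V) (hNn : N ^ n = 0)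
    (p : k[X]) (hp : (Polynomial.aeval N p) ^ n = 0) {w : V} (hw : w ≠ 0) :
    p.coeff 0 = 0 := by
  have h1 : IsNilpotent (Polynomial.aeval N p) := ⟨n, hp⟩
  have h2 : IsNilpotent (Polynomial.aeval N (X * divX p)) := by
    refine ⟨n, ?_⟩
    rw [map_mul, aeval_X, Commute.mul_pow (commute_aeval' N (divX p)), hNn, zero_mul]
  have h3 : (algebraMap k (Module.End k V)) (p.coeff 0)
      = Polynomial.aeval N p - Polynomial.aeval N (X * divX p) := by
    have hsplit : Polynomial.aeval N p
        = Polynomial.aeval N (X * divX p) + algebraMap k (Module.End k V) (p.coeff 0) := by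
      conv_lhs => rw [← X_mul_divX_add p]
      rw [map_add, aeval_C]
    rw [hsplit, add_sub_cancel_left]
  have h4 : IsNilpotent ((algebraMap k (Module.End k V)) (p.coeff 0)) := by
    rw [h3]
    exact Commute.isNilpotent_sub (commute_aeval N p (X * divX p)) h1 h2
  obtain ⟨m, hm⟩ := h4
  rw [← map_pow] at hm
  have h5 : p.coeff 0 ^ m • w = 0 := by
    have h6 := congrArg (fun f : Module.End k V => f w) hm
    simp only [LinearMap.zero_apply] at h6
    rw [Module.algebraMap_end_apply] at h6
    exact h6
  rcases smul_eq_zero.mp h5 with h | h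
  · exact (pow_eq_zero_iff'.mp h).1
  · exact absurd h hw

end Part1
end RegRepAux
-- quotient machinery (appended after pinned defs in final file)
set_option maxHeartbeats 1000000
set_option synthInstance.maxHeartbeats 400000
namespace RegRepAux
section Part2

variable (k : Type) [Field k] (q n : ℕ)

lemma xA_eq_mk (i : Fin q) :
    xA k q n i = Ideal.Quotient.mk _ (MvPolynomial.X i) := rfl

lemma mA_eq_map : mA k q n = Ideal.map
    (Ideal.Quotient.mk ((Ideal.span (Set.range (MvPolynomial.X : Fin q → MvPolynomial (Fin q) k))) ^ n))
    (Ideal.span (Set.range (MvPolynomial.X : Fin q → MvPolynomial (Fin q) k))) := by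
  unfold mA
  rw [Ideal.map_span, ← Set.range_comp]
  rfl

lemma mA_pow_eq_bot : mA k q n ^ n = ⊥ := by
  rw [mA_eq_map, ← Ideal.map_pow, Ideal.map_quotient_self]

lemma pow_eq_zero_of_mem_mA {u : Aqn k q n} (hu : u ∈ mA k q n) : u ^ n = 0 := by
  have h := Ideal.pow_mem_pow hu n
  rw [mA_pow_eq_bot] at h
  simpa using h

lemma xA_mem_mA (i : Fin q) : xA k q n i ∈ mA k q n :=
  Ideal.subset_span ⟨i, rfl⟩

def liftA (w : Fin q → Aqn k q n) (hw : ∀ i, w i ∈ mA k q n) :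
    Aqn k q n →ₐ[k] Aqn k q n :=
  Ideal.Quotient.liftₐ _ (MvPolynomial.aeval w) (by
    intro a ha
    have h1 : Ideal.span (Set.range (MvPolynomial.X : Fin q → MvPolynomial (Fin q) k))
        ≤ Ideal.comap (MvPolynomial.aeval w : MvPolynomial (Fin q) k →ₐ[k] Aqn k q n) (mA k q n) := by
      rw [Ideal.span_le]
      rintro y ⟨i, rfl⟩
      simp only [SetLike.mem_coe, Ideal.mem_comap, MvPolynomial.aeval_X]
      exact hw i
    have h2 : Ideal.map (MvPolynomial.aeval w : MvPolynomial (Fin q) k →ₐ[k] Aqn k q n)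
        ((Ideal.span (Set.range (MvPolynomial.X : Fin q → MvPolynomial (Fin q) k))) ^ n) ≤ ⊥ := by
      rw [Ideal.map_pow, ← mA_pow_eq_bot k q n]
      exact Ideal.pow_right_mono (Ideal.map_le_iff_le_comap.mpr h1) n
    have h3 := h2 (Ideal.mem_map_of_mem _ ha)
    simpa using h3)

lemma liftA_mk (w : Fin q → Aqn k q n) (hw : ∀ i, w i ∈ mA k q n)
    (p : MvPolynomial (Fin q) k) :
    liftA k q n w hw (Ideal.Quotient.mk _ p) = MvPolynomial.aeval w p := by
  rfl

lemma liftA_xA (w : Fin q → Aqn k q n) (hw : ∀ i, w i ∈ mA k q n) (i : Fin q) :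
    liftA k q n w hw (xA k q n i) = w i := by
  rw [xA_eq_mk, liftA_mk, MvPolynomial.aeval_X]

lemma algHom_ext' {B : Type} [Semiring B] [Algebra k B] {f g : Aqn k q n →ₐ[k] B}
    (h : ∀ i, f (xA k q n i) = g (xA k q n i)) : f = g := by
  apply Ideal.Quotient.algHom_ext
  apply MvPolynomial.algHom_ext
  intro i
  simpa [Ideal.Quotient.mkₐ_eq_mk, xA] using h i

end Part2
end RegRepAux

open Polynomial RegRepAux

/-- the kernel of a regular representation of `A_{q,n}` is the image of the
ideal `q_1 = (x_2, …, x_q)` under some `k`-algebra automorphism of `A_{q,n}`. -/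
theorem ker_of_regular_rep_is_translate_of_q1 (k : Type) [Field k] (q n : ℕ) [NeZero q]
    (hq : 2 ≤ q) (hn : 2 ≤ n)
    (V : Type) [AddCommGroup V] [Module k V] [FiniteDimensional k V]
    (hdim : Module.finrank k V = n)
    (ρ : Aqn k q n →ₐ[k] Module.End k V)
    (hreg : ∃ u ∈ mA k q n, ρ (u ^ (n - 1)) ≠ 0) :
    ∃ α : Aqn k q n ≃ₐ[k] Aqn k q n,
      Ideal.map α (q1A k q n) = RingHom.ker ρ := by
  classical
  obtain ⟨u, hu, hureg⟩ := hreg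
  have hn1 : 1 ≤ n := by omega
  set N : Module.End k V := ρ u with hN
  have hNn : N ^ n = 0 := by
    rw [hN, ← map_pow, pow_eq_zero_of_mem_mA k q n hu, map_zero]
  have hN1 : N ^ (n - 1) ≠ 0 := by rw [hN, ← map_pow]; exact hureg
  obtain ⟨v0, hv0⟩ : ∃ v, (N ^ (n - 1)) v ≠ 0 := by
    by_contra h; push_neg at h
    exact hN1 (LinearMap.ext fun v => by simpa using h v)
  have hρcomm : ∀ a b : Aqn k q n, ρ a * ρ b = ρ b * ρ a := fun a b => by
    rw [← map_mul, ← map_mul, mul_comm]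
  have hxnil : ∀ i : Fin q, ρ (xA k q n i) ^ n = 0 := fun i => by
    rw [← map_pow, pow_eq_zero_of_mem_mA k q n (xA_mem_mA k q n i), map_zero]
  -- each ρ(x_i) is a polynomial in N with zero constant term
  have hx_poly : ∀ i : Fin q, ∃ p : Polynomial k,
      ρ (xA k q n i) = Polynomial.aeval N p ∧ p.coeff 0 = 0 := by
    intro i
    obtain ⟨p, hp⟩ := exists_poly_of_commute hn1 hdim N hNn hN1 (ρ (xA k q n i))
      (by rw [hN]; exact hρcomm u _)
    exact ⟨p, hp, coeff_zero_eq_zero hn1 N hNn p (by rw [← hp]; exact hxnil i) hv0⟩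
  choose px hpx hpx0 using hx_poly
  -- find i0 with (px i0).coeff 1 ≠ 0
  have hu' : u ∈ Ideal.span (Set.range (xA k q n)) := hu
  obtain ⟨ci, hci⟩ := Ideal.mem_span_range_iff_exists_fun.mp hu'
  have hc_poly : ∀ i : Fin q, ∃ P : Polynomial k, ρ (ci i) = Polynomial.aeval N P := fun i =>
    exists_poly_of_commute hn1 hdim N hNn hN1 (ρ (ci i)) (by rw [hN]; exact hρcomm u _)
  choose Pc hPc using hc_poly
  obtain ⟨i0, hi0⟩ : ∃ i0 : Fin q, (px i0).coeff 1 ≠ 0 := by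
    by_contra hall
    push_neg at hall
    set w : Polynomial k := ∑ i : Fin q, Pc i * px i with hw
    have hNw : N = Polynomial.aeval N w := by
      conv_lhs => rw [hN, ← hci]
      rw [map_sum, hw, map_sum]
      refine Finset.sum_congr rfl fun i _ => ?_
      rw [map_mul, map_mul, hPc, hpx]
    obtain ⟨wq, hwq⟩ : (X : Polynomial k) ^ 2 ∣ w := by
      rw [hw]
      refine Finset.dvd_sum fun i _ => Dvd.dvd.mul_left ?_ (Pc i)
      rw [X_pow_dvd_iff]
      intro d hd
      interval_cases d
      · exact hpx0 i
      · exact hall i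
    have key : N ^ (n - 2) * Polynomial.aeval N w = 0 := by
      rw [hwq, map_mul, map_pow, aeval_X, ← mul_assoc, ← pow_add,
        show n - 2 + 2 = n by omega, hNn, zero_mul]
    apply hN1
    have h2 : N ^ (n - 1) = N ^ (n - 2) * N := by
      rw [← pow_succ, show n - 2 + 1 = n - 1 by omega]
    rw [h2]
    nth_rewrite 2 [hNw]
    exact key
  -- the regular nilpotent N' = ρ(x_{i0})
  set N' : Module.End k V := ρ (xA k q n i0) with hN'
  have hN'p : N' = Polynomial.aeval N (px i0) := hpx i0
  have hN'n : N' ^ n = 0 := by rw [hN']; exact hxnil i0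
  have hN'1 : N' ^ (n - 1) ≠ 0 := by
    have hpX : X * (px i0).divX = px i0 := by
      conv_rhs => rw [← X_mul_divX_add (px i0)]
      rw [hpx0 i0, map_zero, add_zero]
    have h1 : N' ^ (n - 1) = Polynomial.aeval N ((px i0) ^ (n - 1)) := by
      rw [hN'p, map_pow]
    rw [h1, ← hpX, mul_pow, map_mul, map_pow, aeval_X, pow_mul_aeval N hn1 hNn]
    have hc : (((px i0).divX) ^ (n - 1)).coeff 0 = ((px i0).coeff 1) ^ (n - 1) := by
      rw [coeff_zero_eq_eval_zero, eval_pow, ← coeff_zero_eq_eval_zero, coeff_divX]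
    rw [hc]
    exact smul_ne_zero (pow_ne_zero _ hi0) hN1
  -- each ρ(x_i) is a polynomial in N' with zero constant term
  have hx'_poly : ∀ i : Fin q, ∃ h : Polynomial k,
      ρ (xA k q n i) = Polynomial.aeval N' h ∧ h.coeff 0 = 0 := by
    intro i
    obtain ⟨h, hh⟩ := exists_poly_of_commute hn1 hdim N' hN'n hN'1 (ρ (xA k q n i))
      (by rw [hN']; exact hρcomm _ _)
    exact ⟨h, hh, coeff_zero_eq_zero hn1 N' hN'n h (by rw [← hh]; exact hxnil i) hv0⟩
  choose hx hhx hhx0 using hx'_poly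
  -- substitution automorphism
  have haevalmem : ∀ h : Polynomial k, h.coeff 0 = 0 →
      Polynomial.aeval (xA k q n 0) h ∈ mA k q n := by
    intro h h0
    have hXh : X * h.divX = h := by
      conv_rhs => rw [← X_mul_divX_add h]
      rw [h0, map_zero, add_zero]
    rw [← hXh, map_mul, aeval_X]
    exact Ideal.mul_mem_right _ _ (xA_mem_mA k q n 0)
  set σ : Equiv.Perm (Fin q) := Equiv.swap 0 i0 with hσ
  have hσ0 : σ 0 = i0 := Equiv.swap_apply_left 0 i0
  have hσσ : ∀ i, σ (σ i) = i := fun i => Equiv.swap_apply_self 0 i0 i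
  set wS : Fin q → Aqn k q n := fun i => xA k q n (σ i) with hwS
  have hwSm : ∀ i, wS i ∈ mA k q n := fun i => xA_mem_mA k q n _
  set S : Aqn k q n →ₐ[k] Aqn k q n := liftA k q n wS hwSm with hS
  have hSx : ∀ i, S (xA k q n i) = xA k q n (σ i) := fun i => liftA_xA k q n wS hwSm i
  set wT : Fin q → Aqn k q n := fun i =>
    if i = 0 then xA k q n 0
    else xA k q n i - Polynomial.aeval (xA k q n 0) (hx (σ i)) with hwT
  have hwTm : ∀ i, wT i ∈ mA k q n := by
    intro i
    simp only [hwT]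
    by_cases h : i = 0
    · rw [if_pos h]; exact xA_mem_mA k q n 0
    · rw [if_neg h]
      exact Ideal.sub_mem _ (xA_mem_mA k q n i) (haevalmem _ (hhx0 _))
  set T : Aqn k q n →ₐ[k] Aqn k q n := liftA k q n wT hwTm with hT
  set wT' : Fin q → Aqn k q n := fun i =>
    if i = 0 then xA k q n 0
    else xA k q n i + Polynomial.aeval (xA k q n 0) (hx (σ i)) with hwT'
  have hwT'm : ∀ i, wT' i ∈ mA k q n := by
    intro i
    simp only [hwT']
    by_cases h : i = 0
    · rw [if_pos h]; exact xA_mem_mA k q n 0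
    · rw [if_neg h]
      exact Ideal.add_mem _ (xA_mem_mA k q n i) (haevalmem _ (hhx0 _))
  set T' : Aqn k q n →ₐ[k] Aqn k q n := liftA k q n wT' hwT'm with hT'
  have hT0 : T (xA k q n 0) = xA k q n 0 := by
    rw [hT, liftA_xA]
    simp only [hwT, if_pos]
  have hT'0 : T' (xA k q n 0) = xA k q n 0 := by
    rw [hT', liftA_xA]
    simp only [hwT', if_pos]
  have hTx : ∀ i, i ≠ 0 → T (xA k q n i)
      = xA k q n i - Polynomial.aeval (xA k q n 0) (hx (σ i)) := by
    intro i hi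
    rw [hT, liftA_xA]
    simp only [hwT]
    rw [if_neg hi]
  have hT'x : ∀ i, i ≠ 0 → T' (xA k q n i)
      = xA k q n i + Polynomial.aeval (xA k q n 0) (hx (σ i)) := by
    intro i hi
    rw [hT', liftA_xA]
    simp only [hwT']
    rw [if_neg hi]
  have hSS : S.comp S = AlgHom.id k (Aqn k q n) := by
    apply algHom_ext' k q n
    intro i
    rw [AlgHom.comp_apply, hSx, hSx, AlgHom.id_apply, hσσ]
  have hTT' : T.comp T' = AlgHom.id k (Aqn k q n) := by
    apply algHom_ext' k q n
    intro i
    rw [AlgHom.comp_apply, AlgHom.id_apply]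
    by_cases h : i = 0
    · rw [h, hT'0, hT0]
    · rw [hT'x i h, map_add, hTx i h, ← Polynomial.aeval_algHom_apply, hT0, sub_add_cancel]
  have hT'T : T'.comp T = AlgHom.id k (Aqn k q n) := by
    apply algHom_ext' k q n
    intro i
    rw [AlgHom.comp_apply, AlgHom.id_apply]
    by_cases h : i = 0
    · rw [h, hT0, hT'0]
    · rw [hTx i h, map_sub, hT'x i h, ← Polynomial.aeval_algHom_apply, hT'0,
        add_sub_cancel_right]
  set eS : Aqn k q n ≃ₐ[k] Aqn k q n := AlgEquiv.ofAlgHom S S hSS hSS with heS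
  set eT : Aqn k q n ≃ₐ[k] Aqn k q n := AlgEquiv.ofAlgHom T T' hTT' hT'T with heT
  set α : Aqn k q n ≃ₐ[k] Aqn k q n := eT.trans eS with hα
  have hαx : ∀ a : Aqn k q n, α a = S (T a) := fun a => rfl
  have hα0 : α (xA k q n 0) = xA k q n i0 := by
    rw [hαx, hT0, hSx, hσ0]
  have hρα : ∀ i, i ≠ 0 → ρ (α (xA k q n i)) = 0 := by
    intro i hi
    rw [hαx, hTx i hi, map_sub, hSx, ← Polynomial.aeval_algHom_apply, hSx, hσ0,
      map_sub, ← Polynomial.aeval_algHom_apply, ← hN', hhx, sub_self]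
  -- forward inclusion
  have hq1span : q1A k q n = Ideal.span {y | ∃ i : Fin q, i ≠ 0 ∧ y = xA k q n i} := rfl
  have hsub : Ideal.map α (q1A k q n) ≤ RingHom.ker ρ := by
    rw [Ideal.map_le_iff_le_comap, hq1span]
    apply Ideal.span_le.mpr
    rintro y ⟨i, hi, rfl⟩
    simp only [SetLike.mem_coe, Ideal.mem_comap]
    rw [RingHom.mem_ker]
    exact hρα i hi
  refine ⟨α, le_antisymm hsub fun y hy => ?_⟩
  have hy0 : ρ y = 0 := by rwa [RingHom.mem_ker] at hy
  set z : Aqn k q n := α.symm y with hz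
  have hαz : α z = y := AlgEquiv.apply_symm_apply α y
  -- decompose z = P(x_0) + w1 with w1 ∈ q1A
  obtain ⟨P, hPmem⟩ : ∃ P : Polynomial k,
      z - Polynomial.aeval (xA k q n 0) P ∈ q1A k q n := by
    set mk1 : Aqn k q n →ₐ[k] (Aqn k q n ⧸ q1A k q n) :=
      Ideal.Quotient.mkₐ k (q1A k q n) with hmk1
    have hcomp : (Polynomial.aeval (mk1 (xA k q n 0)) :
          Polynomial k →ₐ[k] (Aqn k q n ⧸ q1A k q n)).comp
          (MvPolynomial.aeval (fun i : Fin q => if i = 0 then (X : Polynomial k) else 0))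
        = mk1.comp (Ideal.Quotient.mkₐ k _) := by
      apply MvPolynomial.algHom_ext
      intro i
      rw [AlgHom.comp_apply, AlgHom.comp_apply, MvPolynomial.aeval_X]
      by_cases h : i = 0
      · rw [if_pos h, aeval_X, h]
        rfl
      · rw [if_neg h, map_zero]
        have hmem : (Ideal.Quotient.mkₐ k (q1A k q n)) (xA k q n i) = 0 := by
          rw [Ideal.Quotient.mkₐ_eq_mk, Ideal.Quotient.eq_zero_iff_mem]
          exact Ideal.subset_span ⟨i, h, rfl⟩
        exact hmem.symm
    have hsurj : ∀ b : Aqn k q n ⧸ q1A k q n, ∃ P : Polynomial k,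
        Polynomial.aeval (mk1 (xA k q n 0)) P = b := by
      intro b
      obtain ⟨a, ha⟩ := Ideal.Quotient.mkₐ_surjective k (q1A k q n) b
      obtain ⟨p, hp⟩ := Ideal.Quotient.mkₐ_surjective k
        ((Ideal.span (Set.range (MvPolynomial.X : Fin q → MvPolynomial (Fin q) k))) ^ n) a
      refine ⟨MvPolynomial.aeval (fun i : Fin q => if i = 0 then (X : Polynomial k) else 0) p, ?_⟩
      have hc := congrArg (fun f : MvPolynomial (Fin q) k →ₐ[k] (Aqn k q n ⧸ q1A k q n) => f p) hcomp
      simp only [AlgHom.comp_apply] at hc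
      rw [hc, hp, ha]
    obtain ⟨P, hP⟩ := hsurj (mk1 z)
    refine ⟨P, ?_⟩
    have h2 : mk1 (Polynomial.aeval (xA k q n 0) P) = mk1 z := by
      rw [← hP, Polynomial.aeval_algHom_apply]
    rw [hmk1, Ideal.Quotient.mkₐ_eq_mk] at h2
    exact Ideal.Quotient.eq.mp h2.symm
  set w1 : Aqn k q n := z - Polynomial.aeval (xA k q n 0) P with hw1
  have hραw1 : ρ (α w1) = 0 := by
    have hmem : α w1 ∈ RingHom.ker ρ := hsub (Ideal.mem_map_of_mem _ hPmem)
    rwa [RingHom.mem_ker] at hmem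
  have hzd : z = Polynomial.aeval (xA k q n 0) P + w1 := by rw [hw1]; ring
  have key : Polynomial.aeval N' P = 0 := by
    have h1 : ρ (α z) = 0 := by rw [hαz]; exact hy0
    rw [hzd, map_add, map_add, hραw1, add_zero, ← Polynomial.aeval_algHom_apply,
      ← Polynomial.aeval_algHom_apply, hα0, ← hN'] at h1
    exact h1
  have hmonic : (X ^ n : Polynomial k).Monic := monic_X_pow n
  have haevmod : Polynomial.aeval N' (P %ₘ X ^ n) = 0 := by
    have hdiv := modByMonic_add_div P (X ^ n)
    have h2 : Polynomial.aeval N' (P %ₘ X ^ n)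
        + N' ^ n * Polynomial.aeval N' (P /ₘ X ^ n) = Polynomial.aeval N' P := by
      conv_rhs => rw [← hdiv]
      rw [map_add, map_mul, map_pow, aeval_X]
    rw [key, hN'n, zero_mul, add_zero] at h2
    exact h2
  obtain ⟨v1, hv1⟩ : ∃ v, (N' ^ (n - 1)) v ≠ 0 := by
    by_contra hcon; push_neg at hcon
    exact hN'1 (LinearMap.ext fun v => by simpa using hcon v)
  have hmod0 : P %ₘ (X ^ n) = 0 := by
    ext j
    rw [coeff_zero]
    by_cases hj : j < n
    · exact coeff_eq_zero_of_apply hn1 N' hN'n hv1 n le_rfl _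
        (by rw [Nat.sub_self, pow_zero, one_mul, haevmod, LinearMap.zero_apply]) j hj
    · apply coeff_eq_zero_of_degree_lt
      refine lt_of_lt_of_le (degree_modByMonic_lt P hmonic) ?_
      rw [degree_X_pow]
      exact_mod_cast Nat.le_of_not_lt hj
  have hP0 : Polynomial.aeval (xA k q n 0) P = 0 := by
    have hdiv := modByMonic_add_div P (X ^ n)
    rw [hmod0, zero_add] at hdiv
    rw [← hdiv, map_mul, map_pow, aeval_X,
      pow_eq_zero_of_mem_mA k q n (xA_mem_mA k q n 0), zero_mul]
  have hzq1 : z ∈ q1A k q n := by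
    rw [hzd, hP0, zero_add]
    exact hPmem
  have hfin : α z ∈ Ideal.map α (q1A k q n) := Ideal.mem_map_of_mem _ hzq1
  rwa [hαz] at hfin
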